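/- Let (X,Y) have the Lancaster density f(x,y) = f₁(x) f₂(y)(1 + Σₙ ρₙ φₙ(x) ψₙ(y)) with Σₙ |ρₙ| cₙ dₙ ≤ 1. Then for every n ≥ 1, E(φₙ(X) | Y) = ρₙ ψₙ(Y) almost surely and E(ψₙ(Y) | X) = ρₙ φₙ(X) almost surely. -/

import Mathlib

open MeasureTheory ProbabilityTheory Real
open scoped ENNReal

noncomputable def covar {Ω : Type*} [MeasurableSpace Ω] (μ : Measure Ω) (X Y : Ω → ℝ) : ℝ :=
  ∫ ω, (X ω - ∫ a, X a ∂μ) * (Y ω - ∫ a, Y a ∂μ) ∂μ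

noncomputable def pearson {Ω : Type*} [MeasurableSpace Ω] (μ : Measure Ω) (X Y : Ω → ℝ) : ℝ :=
  covar μ X Y / (Real.sqrt (variance X μ) * Real.sqrt (variance Y μ))

noncomputable def maxCorr {Ω : Type*} [MeasurableSpace Ω] (μ : Measure Ω) (X Y : Ω → ℝ) : ℝ :=
  sSup { r : ℝ | ∃ g₁ g₂ : ℝ → ℝ, Measurable g₁ ∧ Measurable g₂ ∧
    MemLp (g₁ ∘ X) 2 μ ∧ MemLp (g₂ ∘ Y) 2 μ ∧
    0 < variance (g₁ ∘ X) μ ∧ 0 < variance (g₂ ∘ Y) μ ∧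
    r = pearson μ (g₁ ∘ X) (g₂ ∘ Y) }

/-- `g` is a probability density on `ℝ` supported in `[a, b]`. -/
def IsDensityOn (g : ℝ → ℝ) (a b : ℝ) : Prop :=
  (∀ x, 0 ≤ g x) ∧ (∀ x, x ∉ Set.Icc a b → g x = 0) ∧ (∫ x, g x = 1)

/-- `φ` is the orthonormal polynomial system of the density `g`:
degree `n`, positive leading coefficients, orthonormal in `L²(g dx)`. -/
def OrthonormalPolys (g : ℝ → ℝ) (φ : ℕ → Polynomial ℝ) : Prop :=
  (∀ n, (φ n).natDegree = n) ∧ (∀ n, 0 < (φ n).leadingCoeff) ∧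
  (∀ m n, ∫ x, (φ m).eval x * (φ n).eval x * g x = if m = n then 1 else 0)

/-- The Lancaster density `f(x,y) = f₁(x) f₂(y) (1 + Σₙ≥₁ ρₙ φₙ(x) ψₙ(y))`. -/
noncomputable def lancaster (f₁ f₂ : ℝ → ℝ) (φ ψ : ℕ → Polynomial ℝ) (ρ : ℕ → ℝ)
    (x y : ℝ) : ℝ :=
  f₁ x * f₂ y * (1 + ∑' n : ℕ, ρ (n + 1) * (φ (n + 1)).eval x * (ψ (n + 1)).eval y)

lemma meas_tsum {α : Type*} [MeasurableSpace α] {F : ℕ → α → ℝ}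
    (hm : ∀ n, Measurable (F n)) (hs : ∀ x, Summable fun n => F n x) :
    Measurable fun x => ∑' n, F n x := by
  apply measurable_of_tendsto_metrizable (f := fun N x => ∑ n ∈ Finset.range N, F n x)
  · exact fun N => Finset.measurable_sum _ fun n _ => hm n
  · rw [tendsto_pi_nhds]
    exact fun x => (hs x).hasSum.tendsto_sum_nat

lemma IsDensityOn.integrable {g : ℝ → ℝ} {a b : ℝ} (h : IsDensityOn g a b) :
    Integrable g := by
  by_contra hc
  have h1 := h.2.2
  rw [integral_undef hc] at h1
  norm_num at h1

lemma integrable_mul_density {f : ℝ → ℝ} {a b : ℝ} (hf : IsDensityOn f a b)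
    (hfm : Measurable f) {g : ℝ → ℝ} (hg : Measurable g) {M : ℝ}
    (hM : ∀ x ∈ Set.Icc a b, |g x| ≤ M) : Integrable (fun x => g x * f x) := by
  refine Integrable.mono' (hf.integrable.const_mul M) ((hg.mul hfm).aestronglyMeasurable) ?_
  refine Filter.Eventually.of_forall fun x => ?_
  by_cases hx : x ∈ Set.Icc a b
  · have h1 := hM x hx
    have h2 := hf.1 x
    rw [Real.norm_eq_abs, abs_mul, abs_of_nonneg h2]
    exact mul_le_mul_of_nonneg_right h1 h2
  · rw [hf.2.1 x hx]; simp

lemma poly_bound (P : Polynomial ℝ) (a b : ℝ) :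
    ∃ M, 0 ≤ M ∧ ∀ x ∈ Set.Icc a b, |P.eval x| ≤ M := by
  obtain ⟨M, hM⟩ := isCompact_Icc.exists_bound_of_continuousOn
    (P.continuous.continuousOn (s := Set.Icc a b))
  refine ⟨max M 0, le_max_right _ _, fun x hx => ?_⟩
  have := hM x hx
  rw [Real.norm_eq_abs] at this
  exact this.trans (le_max_left _ _)

lemma sup_bound {P : Polynomial ℝ} {a b x : ℝ} (hx : x ∈ Set.Icc a b) :
    |P.eval x| ≤ sSup ((fun x => |P.eval x|) '' Set.Icc a b) :=
  le_csSup ((isCompact_Icc.image (P.continuous.abs)).bddAbove) ⟨x, hx, rfl⟩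

lemma orthonormal_zero_eq_one {f : ℝ → ℝ} {a b : ℝ} (hf : IsDensityOn f a b)
    {φ : ℕ → Polynomial ℝ} (hφ : OrthonormalPolys f φ) : φ 0 = 1 := by
  obtain ⟨r, hr⟩ := Polynomial.natDegree_eq_zero.mp (hφ.1 0)
  have hpos : 0 < r := by
    have := hφ.2.1 0
    rw [← hr, Polynomial.leadingCoeff_C] at this
    exact this
  have h := hφ.2.2 0 0
  rw [← hr] at h
  simp only [Polynomial.eval_C, if_true, eq_self_iff_true] at h
  rw [integral_const_mul, hf.2.2, mul_one] at h
  have : r = 1 := by nlinarith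
  rw [← hr, this, Polynomial.C_1]

lemma map_swap_withDensity (g : ℝ × ℝ → ℝ≥0∞) (hg : Measurable g) :
    Measure.map Prod.swap ((volume : Measure (ℝ × ℝ)).withDensity g) =
      (volume : Measure (ℝ × ℝ)).withDensity (fun p => g p.swap) := by
  have hvol : Measure.map Prod.swap (volume : Measure (ℝ × ℝ)) = volume := by
    rw [Measure.volume_eq_prod, Measure.prod_swap]
  ext t ht
  rw [Measure.map_apply measurable_swap ht,
    withDensity_apply _ (ht.preimage measurable_swap), withDensity_apply _ ht]
  have := setLIntegral_map (μ := (volume : Measure (ℝ × ℝ))) ht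
    (f := fun p : ℝ × ℝ => g p.swap) (hg.comp measurable_swap) measurable_swap
  rw [hvol] at this
  rw [this]
  simp

section Lanc

variable {f₁ f₂ : ℝ → ℝ} {α₁ ω₁ α₂ ω₂ : ℝ} {φ ψ : ℕ → Polynomial ℝ} {c d : ℕ → ℝ}
  {ρ : ℕ → ℝ}

lemma lanc_term_bound (hf₁ : IsDensityOn f₁ α₁ ω₁) (hf₂ : IsDensityOn f₂ α₂ ω₂)
    (hc : ∀ n, c n = sSup ((fun x => |(φ n).eval x|) '' Set.Icc α₁ ω₁))
    (hd : ∀ n, d n = sSup ((fun y => |(ψ n).eval y|) '' Set.Icc α₂ ω₂))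
    (ρ : ℕ → ℝ) (k : ℕ) (p : ℝ × ℝ) :
    ‖(ρ (k+1) * (φ (k+1)).eval p.1 * (ψ (k+1)).eval p.2) * (f₁ p.1 * f₂ p.2)‖ ≤
      (|ρ (k+1)| * c (k+1) * d (k+1)) * (f₁ p.1 * f₂ p.2) := by
  by_cases hx : p.1 ∈ Set.Icc α₁ ω₁
  · by_cases hy : p.2 ∈ Set.Icc α₂ ω₂
    · have e1 : |(φ (k+1)).eval p.1| ≤ c (k+1) := by rw [hc]; exact sup_bound hx
      have e2 : |(ψ (k+1)).eval p.2| ≤ d (k+1) := by rw [hd]; exact sup_bound hy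
      have e3 := hf₁.1 p.1
      have e4 := hf₂.1 p.2
      rw [Real.norm_eq_abs, abs_mul, abs_mul, abs_mul,
        abs_of_nonneg (mul_nonneg e3 e4)]
      have h5 : |ρ (k+1)| * |(φ (k+1)).eval p.1| * |(ψ (k+1)).eval p.2| ≤
          |ρ (k+1)| * c (k+1) * d (k+1) := by
        refine mul_le_mul (mul_le_mul_of_nonneg_left e1 (abs_nonneg _)) e2 (abs_nonneg _) ?_
        exact mul_nonneg (abs_nonneg _) (le_trans (abs_nonneg _) e1)
      exact mul_le_mul_of_nonneg_right h5 (mul_nonneg e3 e4)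
    · rw [hf₂.2.1 p.2 hy]; simp
  · rw [hf₁.2.1 p.1 hx]; simp

lemma lanc_term_summable (hf₁ : IsDensityOn f₁ α₁ ω₁) (hf₂ : IsDensityOn f₂ α₂ ω₂)
    (hc : ∀ n, c n = sSup ((fun x => |(φ n).eval x|) '' Set.Icc α₁ ω₁))
    (hd : ∀ n, d n = sSup ((fun y => |(ψ n).eval y|) '' Set.Icc α₂ ω₂))
    (hsum : Summable fun n : ℕ => |ρ (n + 1)| * c (n + 1) * d (n + 1)) (p : ℝ × ℝ) :
    Summable fun k : ℕ =>
      (ρ (k+1) * (φ (k+1)).eval p.1 * (ψ (k+1)).eval p.2) * (f₁ p.1 * f₂ p.2) :=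
  Summable.of_norm_bounded (hsum.mul_right _)
    (fun k => lanc_term_bound hf₁ hf₂ hc hd ρ k p)

lemma lanc_expand (f₁ f₂ : ℝ → ℝ) (φ ψ : ℕ → Polynomial ℝ) (ρ : ℕ → ℝ) (p : ℝ × ℝ) :
    lancaster f₁ f₂ φ ψ ρ p.1 p.2 = f₁ p.1 * f₂ p.2 +
      ∑' k : ℕ, (ρ (k+1) * (φ (k+1)).eval p.1 * (ψ (k+1)).eval p.2) * (f₁ p.1 * f₂ p.2) := by
  show f₁ p.1 * f₂ p.2 * (1 + ∑' k : ℕ, ρ (k+1) * (φ (k+1)).eval p.1 * (ψ (k+1)).eval p.2) = _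
  rw [mul_add, mul_one, mul_comm (f₁ p.1 * f₂ p.2), ← tsum_mul_right]

lemma measurable_lancaster (hf₁ : IsDensityOn f₁ α₁ ω₁) (hf₂ : IsDensityOn f₂ α₂ ω₂)
    (hm₁ : Measurable f₁) (hm₂ : Measurable f₂)
    (hc : ∀ n, c n = sSup ((fun x => |(φ n).eval x|) '' Set.Icc α₁ ω₁))
    (hd : ∀ n, d n = sSup ((fun y => |(ψ n).eval y|) '' Set.Icc α₂ ω₂))
    (hsum : Summable fun n : ℕ => |ρ (n + 1)| * c (n + 1) * d (n + 1)) :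
    Measurable fun p : ℝ × ℝ => lancaster f₁ f₂ φ ψ ρ p.1 p.2 := by
  have he : (fun p : ℝ × ℝ => lancaster f₁ f₂ φ ψ ρ p.1 p.2) = fun p => f₁ p.1 * f₂ p.2 +
      ∑' k : ℕ, (ρ (k+1) * (φ (k+1)).eval p.1 * (ψ (k+1)).eval p.2) * (f₁ p.1 * f₂ p.2) :=
    funext (lanc_expand f₁ f₂ φ ψ ρ)
  rw [he]
  refine ((hm₁.comp measurable_fst).mul (hm₂.comp measurable_snd)).add
    (meas_tsum (fun k => ?_) (fun p => lanc_term_summable hf₁ hf₂ hc hd hsum p))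
  exact ((measurable_const.mul ((φ (k+1)).continuous.measurable.comp measurable_fst)).mul
    ((ψ (k+1)).continuous.measurable.comp measurable_snd)).mul
    ((hm₁.comp measurable_fst).mul (hm₂.comp measurable_snd))

lemma lanc_nonneg (hf₁ : IsDensityOn f₁ α₁ ω₁) (hf₂ : IsDensityOn f₂ α₂ ω₂)
    (hc : ∀ n, c n = sSup ((fun x => |(φ n).eval x|) '' Set.Icc α₁ ω₁))
    (hd : ∀ n, d n = sSup ((fun y => |(ψ n).eval y|) '' Set.Icc α₂ ω₂))
    (hsum : Summable fun n : ℕ => |ρ (n + 1)| * c (n + 1) * d (n + 1))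
    (hρ : ∑' n : ℕ, |ρ (n + 1)| * c (n + 1) * d (n + 1) ≤ 1) (p : ℝ × ℝ) :
    0 ≤ lancaster f₁ f₂ φ ψ ρ p.1 p.2 := by
  have h0 : 0 ≤ f₁ p.1 * f₂ p.2 := mul_nonneg (hf₁.1 _) (hf₂.1 _)
  have hs : Summable fun k : ℕ =>
      ‖(ρ (k+1) * (φ (k+1)).eval p.1 * (ψ (k+1)).eval p.2) * (f₁ p.1 * f₂ p.2)‖ :=
    Summable.of_nonneg_of_le (fun k => norm_nonneg _)
      (fun k => lanc_term_bound hf₁ hf₂ hc hd ρ k p) (hsum.mul_right _)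
  have h1 : ‖∑' k : ℕ, (ρ (k+1) * (φ (k+1)).eval p.1 * (ψ (k+1)).eval p.2) *
      (f₁ p.1 * f₂ p.2)‖ ≤ f₁ p.1 * f₂ p.2 := by
    calc ‖∑' k : ℕ, (ρ (k+1) * (φ (k+1)).eval p.1 * (ψ (k+1)).eval p.2) *
        (f₁ p.1 * f₂ p.2)‖
        ≤ ∑' k : ℕ, ‖(ρ (k+1) * (φ (k+1)).eval p.1 * (ψ (k+1)).eval p.2) *
          (f₁ p.1 * f₂ p.2)‖ := norm_tsum_le_tsum_norm hs
      _ ≤ ∑' k : ℕ, (|ρ (k+1)| * c (k+1) * d (k+1)) * (f₁ p.1 * f₂ p.2) :=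
          Summable.tsum_le_tsum (fun k => lanc_term_bound hf₁ hf₂ hc hd ρ k p) hs (hsum.mul_right _)
      _ = (∑' k : ℕ, |ρ (k+1)| * c (k+1) * d (k+1)) * (f₁ p.1 * f₂ p.2) := tsum_mul_right
      _ ≤ 1 * (f₁ p.1 * f₂ p.2) := mul_le_mul_of_nonneg_right hρ h0
      _ = f₁ p.1 * f₂ p.2 := one_mul _
  rw [lanc_expand f₁ f₂ φ ψ ρ p]
  rw [Real.norm_eq_abs] at h1
  have := abs_le.mp h1
  linarith [this.1]

end Lanc
noncomputable def Hfun (P : Polynomial ℝ) (h f₁ f₂ : ℝ → ℝ) (φ ψ : ℕ → Polynomial ℝ)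
    (ρ : ℕ → ℝ) : ℕ → ℝ × ℝ → ℝ
  | 0 => fun p => (P.eval p.1 * f₁ p.1) * (h p.2 * f₂ p.2)
  | (j+1) => fun p => (ρ (j+1) * (P.eval p.1 * (φ (j+1)).eval p.1 * f₁ p.1)) *
      (h p.2 * (ψ (j+1)).eval p.2 * f₂ p.2)

def bseq (ρ c d : ℕ → ℝ) (M C : ℝ) : ℕ → ℝ
  | 0 => M * C
  | (j+1) => (|ρ (j+1)| * c (j+1) * d (j+1)) * (M * C)

section Key

variable {f₁ f₂ : ℝ → ℝ} {α₁ ω₁ α₂ ω₂ : ℝ} {φ ψ : ℕ → Polynomial ℝ} {c d : ℕ → ℝ}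
  {ρ : ℕ → ℝ}

lemma key_integral (hf₁ : IsDensityOn f₁ α₁ ω₁) (hf₂ : IsDensityOn f₂ α₂ ω₂)
    (hm₁ : Measurable f₁) (hm₂ : Measurable f₂)
    (hc : ∀ n, c n = sSup ((fun x => |(φ n).eval x|) '' Set.Icc α₁ ω₁))
    (hd : ∀ n, d n = sSup ((fun y => |(ψ n).eval y|) '' Set.Icc α₂ ω₂))
    (hsum : Summable fun n : ℕ => |ρ (n + 1)| * c (n + 1) * d (n + 1))
    (h₁ : α₁ ≤ ω₁) (h₂ : α₂ ≤ ω₂)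
    (P : Polynomial ℝ) (h : ℝ → ℝ) (hh : Measurable h) (C : ℝ) (hC0 : 0 ≤ C)
    (hC : ∀ y ∈ Set.Icc α₂ ω₂, |h y| ≤ C) :
    ∫ p : ℝ × ℝ, P.eval p.1 * h p.2 * lancaster f₁ f₂ φ ψ ρ p.1 p.2 =
      (∫ x, P.eval x * f₁ x) * (∫ y, h y * f₂ y) +
      ∑' k : ℕ, ρ (k+1) * ((∫ x, P.eval x * (φ (k+1)).eval x * f₁ x) *
        (∫ y, h y * (ψ (k+1)).eval y * f₂ y)) := by
  obtain ⟨M, hM0, hM⟩ := poly_bound P α₁ ω₁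
  set H : ℕ → ℝ × ℝ → ℝ := Hfun P h f₁ f₂ φ ψ ρ with hHdef
  set b : ℕ → ℝ := bseq ρ c d M C with hbdef
  -- nonnegativity of b
  have hcnn : ∀ k, 0 ≤ c k := fun k =>
    le_trans (abs_nonneg _) (by rw [hc]; exact sup_bound (Set.left_mem_Icc.mpr h₁))
  have hdnn : ∀ k, 0 ≤ d k := fun k =>
    le_trans (abs_nonneg _) (by rw [hd]; exact sup_bound (Set.left_mem_Icc.mpr h₂))
  have hb0 : ∀ k, 0 ≤ b k := by
    intro k
    cases k with
    | zero => exact mul_nonneg hM0 hC0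
    | succ j =>
      exact mul_nonneg (mul_nonneg (mul_nonneg (abs_nonneg _) (hcnn _)) (hdnn _))
        (mul_nonneg hM0 hC0)
  -- summability of b
  have hbsum : Summable b := by
    rw [← summable_nat_add_iff 1]
    exact Summable.congr (hsum.mul_right (M * C)) (fun j => rfl)
  -- pointwise norm bound
  have hHb : ∀ k p, ‖H k p‖ ≤ b k * (f₁ p.1 * f₂ p.2) := by
    intro k p
    have e3 := hf₁.1 p.1
    have e4 := hf₂.1 p.2
    by_cases hx : p.1 ∈ Set.Icc α₁ ω₁
    · by_cases hy : p.2 ∈ Set.Icc α₂ ω₂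
      · have b1 := hM p.1 hx
        have b2 := hC p.2 hy
        cases k with
        | zero =>
          simp only [hHdef, hbdef, Hfun, bseq, Real.norm_eq_abs, abs_mul]
          calc |P.eval p.1| * |f₁ p.1| * (|h p.2| * |f₂ p.2|)
              = (|P.eval p.1| * |h p.2|) * (f₁ p.1 * f₂ p.2) := by
                rw [abs_of_nonneg e3, abs_of_nonneg e4]; ring
            _ ≤ (M * C) * (f₁ p.1 * f₂ p.2) :=
                mul_le_mul_of_nonneg_right
                  (mul_le_mul b1 b2 (abs_nonneg _) hM0) (mul_nonneg e3 e4)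
        | succ j =>
          have b3 : |(φ (j+1)).eval p.1| ≤ c (j+1) := by rw [hc]; exact sup_bound hx
          have b4 : |(ψ (j+1)).eval p.2| ≤ d (j+1) := by rw [hd]; exact sup_bound hy
          have hc0 : 0 ≤ c (j+1) := le_trans (abs_nonneg _) b3
          have hd0 : 0 ≤ d (j+1) := le_trans (abs_nonneg _) b4
          simp only [hHdef, hbdef, Hfun, bseq, Real.norm_eq_abs, abs_mul]
          calc |ρ (j+1)| * (|P.eval p.1| * |(φ (j+1)).eval p.1| * |f₁ p.1|) *
                (|h p.2| * |(ψ (j+1)).eval p.2| * |f₂ p.2|)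
              = (|ρ (j+1)| * (|P.eval p.1| * |(φ (j+1)).eval p.1|) *
                  (|h p.2| * |(ψ (j+1)).eval p.2|)) * (f₁ p.1 * f₂ p.2) := by
                rw [abs_of_nonneg e3, abs_of_nonneg e4]; ring
            _ ≤ (|ρ (j+1)| * (M * c (j+1)) * (C * d (j+1))) * (f₁ p.1 * f₂ p.2) := by
                refine mul_le_mul_of_nonneg_right ?_ (mul_nonneg e3 e4)
                refine mul_le_mul
                  (mul_le_mul_of_nonneg_left
                    (mul_le_mul b1 b3 (abs_nonneg _) hM0) (abs_nonneg _))
                  (mul_le_mul b2 b4 (abs_nonneg _) hC0)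
                  (mul_nonneg (abs_nonneg _) (abs_nonneg _)) ?_
                positivity
            _ = ((|ρ (j+1)| * c (j+1) * d (j+1)) * (M * C)) * (f₁ p.1 * f₂ p.2) := by ring
      · have hz : f₂ p.2 = 0 := hf₂.2.1 p.2 hy
        cases k <;> simp [hHdef, Hfun, hz]
    · have hz : f₁ p.1 = 0 := hf₁.2.1 p.1 hx
      cases k <;> simp [hHdef, Hfun, hz]
  -- measurability
  have hmeasH : ∀ k, Measurable (H k) := by
    intro k
    cases k with
    | zero =>
      exact ((P.continuous.measurable.comp measurable_fst).mul
        (hm₁.comp measurable_fst)).mul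
        ((hh.comp measurable_snd).mul (hm₂.comp measurable_snd))
    | succ j =>
      exact (measurable_const.mul (((P.continuous.measurable.comp measurable_fst).mul
        ((φ (j+1)).continuous.measurable.comp measurable_fst)).mul
        (hm₁.comp measurable_fst))).mul
        (((hh.comp measurable_snd).mul
          ((ψ (j+1)).continuous.measurable.comp measurable_snd)).mul
          (hm₂.comp measurable_snd))
  -- base lintegral
  have hbase : ∫⁻ p : ℝ × ℝ, ENNReal.ofReal (f₁ p.1 * f₂ p.2) ∂volume = 1 := by
    rw [Measure.volume_eq_prod]
    have he : (fun p : ℝ × ℝ => ENNReal.ofReal (f₁ p.1 * f₂ p.2)) =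
        fun p : ℝ × ℝ => ENNReal.ofReal (f₁ p.1) * ENNReal.ofReal (f₂ p.2) :=
      funext fun p => ENNReal.ofReal_mul (hf₁.1 _)
    rw [he, lintegral_prod_mul (hm₁.ennreal_ofReal.aemeasurable)
      (hm₂.ennreal_ofReal.aemeasurable),
      ← ofReal_integral_eq_lintegral_ofReal hf₁.integrable
        (Filter.Eventually.of_forall hf₁.1),
      ← ofReal_integral_eq_lintegral_ofReal hf₂.integrable
        (Filter.Eventually.of_forall hf₂.1),
      hf₁.2.2, hf₂.2.2]
    simp
  -- lintegral bounds
  have hlintH : ∀ k, ∫⁻ p, ‖H k p‖₊ ∂(volume : Measure (ℝ × ℝ)) ≤ ENNReal.ofReal (b k) := by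
    intro k
    calc ∫⁻ p, (‖H k p‖₊ : ℝ≥0∞) ∂(volume : Measure (ℝ × ℝ))
        ≤ ∫⁻ p : ℝ × ℝ, ENNReal.ofReal (b k * (f₁ p.1 * f₂ p.2)) ∂volume := by
          refine lintegral_mono fun p => ?_
          rw [← enorm_eq_nnnorm, ← ofReal_norm]
          exact ENNReal.ofReal_le_ofReal (hHb k p)
      _ = ENNReal.ofReal (b k) * ∫⁻ p : ℝ × ℝ, ENNReal.ofReal (f₁ p.1 * f₂ p.2) ∂volume := by
          have hmf : Measurable fun p : ℝ × ℝ => ENNReal.ofReal (f₁ p.1 * f₂ p.2) :=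
            ((hm₁.comp measurable_fst).mul (hm₂.comp measurable_snd)).ennreal_ofReal
          rw [← lintegral_const_mul _ hmf]
          exact lintegral_congr fun p => ENNReal.ofReal_mul (hb0 k)
      _ = ENNReal.ofReal (b k) := by rw [hbase, mul_one]
  have hlintsum : ∑' k, ∫⁻ p, ‖H k p‖₊ ∂(volume : Measure (ℝ × ℝ)) ≠ ⊤ := by
    refine ne_top_of_le_ne_top ?_ (ENNReal.tsum_le_tsum hlintH)
    rw [← ENNReal.ofReal_tsum_of_nonneg hb0 hbsum]
    exact ENNReal.ofReal_ne_top
  -- pointwise summability of H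
  have hsumH : ∀ p : ℝ × ℝ, Summable fun k => H k p := by
    intro p
    rw [← summable_nat_add_iff 1]
    refine Summable.of_norm_bounded ?_
      (fun j => hHb (j+1) p)
    exact (Summable.congr (hsum.mul_right (M * C)) (fun j => rfl)).mul_right _
  -- pointwise expansion
  have hptw : ∀ p : ℝ × ℝ,
      P.eval p.1 * h p.2 * lancaster f₁ f₂ φ ψ ρ p.1 p.2 = ∑' k, H k p := by
    intro p
    rw [Summable.tsum_eq_zero_add (hsumH p), lanc_expand f₁ f₂ φ ψ ρ p, mul_add]
    congr 1
    · show _ = (P.eval p.1 * f₁ p.1) * (h p.2 * f₂ p.2)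
      ring
    · rw [← tsum_mul_left]
      refine tsum_congr fun j => ?_
      show _ = (ρ (j+1) * (P.eval p.1 * (φ (j+1)).eval p.1 * f₁ p.1)) *
        (h p.2 * (ψ (j+1)).eval p.2 * f₂ p.2)
      ring
  -- summability of integrals
  have hintsummable : Summable fun k => ∫ p, H k p ∂(volume : Measure (ℝ × ℝ)) := by
    refine Summable.of_norm_bounded
      (ENNReal.summable_toReal hlintsum) (fun k => ?_)
    have h1 := norm_integral_le_lintegral_norm (μ := (volume : Measure (ℝ × ℝ))) (H k)
    have h2 : ∫⁻ a, ENNReal.ofReal ‖H k a‖ ∂(volume : Measure (ℝ × ℝ)) =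
        ∫⁻ a, (‖H k a‖₊ : ℝ≥0∞) ∂(volume : Measure (ℝ × ℝ)) :=
      lintegral_congr fun a => by rw [ofReal_norm, enorm_eq_nnnorm]
    rw [h2] at h1
    exact h1
  -- main computation
  have hint0 : ∫ p : ℝ × ℝ, H 0 p ∂volume =
      (∫ x, P.eval x * f₁ x) * (∫ y, h y * f₂ y) := by
    show ∫ p : ℝ × ℝ, (fun x => P.eval x * f₁ x) p.1 * (fun y => h y * f₂ y) p.2 ∂volume = _
    rw [Measure.volume_eq_prod]
    exact integral_prod_mul (fun x => P.eval x * f₁ x) (fun y => h y * f₂ y)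
  have hintS : ∀ j : ℕ, ∫ p : ℝ × ℝ, H (j+1) p ∂volume =
      ρ (j+1) * ((∫ x, P.eval x * (φ (j+1)).eval x * f₁ x) *
        (∫ y, h y * (ψ (j+1)).eval y * f₂ y)) := by
    intro j
    show ∫ p : ℝ × ℝ, (fun x => ρ (j+1) * (P.eval x * (φ (j+1)).eval x * f₁ x)) p.1 *
      (fun y => h y * (ψ (j+1)).eval y * f₂ y) p.2 ∂volume = _
    rw [Measure.volume_eq_prod,
      integral_prod_mul (fun x => ρ (j+1) * (P.eval x * (φ (j+1)).eval x * f₁ x))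
        (fun y => h y * (ψ (j+1)).eval y * f₂ y),
      integral_const_mul, mul_assoc]
  calc ∫ p : ℝ × ℝ, P.eval p.1 * h p.2 * lancaster f₁ f₂ φ ψ ρ p.1 p.2
      = ∫ p : ℝ × ℝ, ∑' k, H k p ∂volume := by
        exact integral_congr_ae (Filter.Eventually.of_forall hptw)
    _ = ∑' k, ∫ p : ℝ × ℝ, H k p ∂volume :=
        integral_tsum (fun k => (hmeasH k).aestronglyMeasurable) hlintsum
    _ = (∫ p : ℝ × ℝ, H 0 p ∂volume) + ∑' j, ∫ p : ℝ × ℝ, H (j+1) p ∂volume :=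
        Summable.tsum_eq_zero_add hintsummable
    _ = (∫ x, P.eval x * f₁ x) * (∫ y, h y * f₂ y) +
        ∑' k : ℕ, ρ (k+1) * ((∫ x, P.eval x * (φ (k+1)).eval x * f₁ x) *
          (∫ y, h y * (ψ (k+1)).eval y * f₂ y)) := by
        rw [hint0]
        exact congrArg _ (tsum_congr hintS)

end Key
lemma lancaster_condexp {Ω : Type*} [MeasurableSpace Ω] (μ : Measure Ω) [IsProbabilityMeasure μ]
    (X Y : Ω → ℝ) (hX : Measurable X) (hY : Measurable Y)
    (α₁ ω₁ α₂ ω₂ : ℝ) (h₁ : α₁ ≤ ω₁) (h₂ : α₂ ≤ ω₂)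
    (f₁ f₂ : ℝ → ℝ) (hf₁ : IsDensityOn f₁ α₁ ω₁) (hf₂ : IsDensityOn f₂ α₂ ω₂)
    (hm₁ : Measurable f₁) (hm₂ : Measurable f₂)
    (φ ψ : ℕ → Polynomial ℝ)
    (hφ : OrthonormalPolys f₁ φ) (hψ : OrthonormalPolys f₂ ψ)
    (c d : ℕ → ℝ)
    (hc : ∀ n, c n = sSup ((fun x => |(φ n).eval x|) '' Set.Icc α₁ ω₁))
    (hd : ∀ n, d n = sSup ((fun y => |(ψ n).eval y|) '' Set.Icc α₂ ω₂))
    (ρ : ℕ → ℝ)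
    (hsum : Summable fun n : ℕ => |ρ (n + 1)| * c (n + 1) * d (n + 1))
    (hρ : ∑' n : ℕ, |ρ (n + 1)| * c (n + 1) * d (n + 1) ≤ 1)
    (hjoint : Measure.map (fun ω => (X ω, Y ω)) μ =
      (volume : Measure (ℝ × ℝ)).withDensity
        (fun p => ENNReal.ofReal (lancaster f₁ f₂ φ ψ ρ p.1 p.2)))
    (n : ℕ) (hn : 1 ≤ n) :
    μ[(fun ω => (φ n).eval (X ω)) | MeasurableSpace.comap Y inferInstance]
      =ᵐ[μ] fun ω => ρ n * (ψ n).eval (Y ω) := by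
  have hcnn : ∀ k, 0 ≤ c k := fun k =>
    le_trans (abs_nonneg _) (by rw [hc]; exact sup_bound (Set.left_mem_Icc.mpr h₁))
  have hdnn : ∀ k, 0 ≤ d k := fun k =>
    le_trans (abs_nonneg _) (by rw [hd]; exact sup_bound (Set.left_mem_Icc.mpr h₂))
  have measL : Measurable fun p : ℝ × ℝ => lancaster f₁ f₂ φ ψ ρ p.1 p.2 :=
    measurable_lancaster hf₁ hf₂ hm₁ hm₂ hc hd hsum
  have hLnn : ∀ p : ℝ × ℝ, 0 ≤ lancaster f₁ f₂ φ ψ ρ p.1 p.2 :=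
    lanc_nonneg hf₁ hf₂ hc hd hsum hρ
  -- integral against the withDensity measure
  have hwd : ∀ g : ℝ × ℝ → ℝ,
      ∫ p, g p ∂((volume : Measure (ℝ × ℝ)).withDensity
        (fun p => ENNReal.ofReal (lancaster f₁ f₂ φ ψ ρ p.1 p.2))) =
      ∫ p : ℝ × ℝ, g p * lancaster f₁ f₂ φ ψ ρ p.1 p.2 := by
    intro g
    have h1 : (fun p : ℝ × ℝ => ENNReal.ofReal (lancaster f₁ f₂ φ ψ ρ p.1 p.2)) =
        (fun p : ℝ × ℝ =>
          ((fun q : ℝ × ℝ => (lancaster f₁ f₂ φ ψ ρ q.1 q.2).toNNReal) p : ℝ≥0∞)) := rfl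
    rw [h1, integral_withDensity_eq_integral_smul measL.real_toNNReal]
    refine integral_congr_ae (Filter.Eventually.of_forall fun p => ?_)
    show (lancaster f₁ f₂ φ ψ ρ p.1 p.2).toNNReal • g p =
      g p * lancaster f₁ f₂ φ ψ ρ p.1 p.2
    rw [NNReal.smul_def, Real.coe_toNNReal _ (hLnn p), smul_eq_mul, mul_comm]
  -- pulling back along (X, Y)
  have hpull : ∀ g : ℝ × ℝ → ℝ, Measurable g →
      ∫ ω, g (X ω, Y ω) ∂μ = ∫ p : ℝ × ℝ, g p * lancaster f₁ f₂ φ ψ ρ p.1 p.2 := by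
    intro g hg
    calc ∫ ω, g (X ω, Y ω) ∂μ
        = ∫ p, g p ∂(Measure.map (fun ω => (X ω, Y ω)) μ) :=
          (integral_map (hX.prodMk hY).aemeasurable hg.aestronglyMeasurable).symm
      _ = ∫ p : ℝ × ℝ, g p * lancaster f₁ f₂ φ ψ ρ p.1 p.2 := by rw [hjoint]; exact hwd g
  -- orthogonality facts
  have o1 : φ 0 = 1 := orthonormal_zero_eq_one hf₁ hφ
  have oφ1 : ∀ k, 1 ≤ k → ∫ x, (φ k).eval x * f₁ x = 0 := by
    intro k hk
    have h := hφ.2.2 k 0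
    rw [o1] at h
    simp only [Polynomial.eval_one, mul_one] at h
    rw [if_neg (by omega)] at h
    exact h
  -- main integral computation, φ n side
  have hmain : ∀ (h : ℝ → ℝ), Measurable h → ∀ C : ℝ, 0 ≤ C →
      (∀ y ∈ Set.Icc α₂ ω₂, |h y| ≤ C) →
      ∫ p : ℝ × ℝ, (φ n).eval p.1 * h p.2 * lancaster f₁ f₂ φ ψ ρ p.1 p.2 =
        ρ n * ∫ y, h y * (ψ n).eval y * f₂ y := by
    intro h hh C hC0 hC
    rw [key_integral hf₁ hf₂ hm₁ hm₂ hc hd hsum h₁ h₂ (φ n) h hh C hC0 hC,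
      oφ1 n hn, zero_mul, zero_add]
    rw [tsum_eq_single (n - 1) ?_]
    · have hidx : n - 1 + 1 = n := Nat.succ_pred_eq_of_pos hn
      rw [hidx, hφ.2.2 n n, if_pos rfl, one_mul]
    · intro k hk
      rw [hφ.2.2 n (k + 1), if_neg (by omega), zero_mul, mul_zero]
  -- main integral computation, constant side
  have hmain1 : ∀ (h : ℝ → ℝ), Measurable h → ∀ C : ℝ, 0 ≤ C →
      (∀ y ∈ Set.Icc α₂ ω₂, |h y| ≤ C) →
      ∫ p : ℝ × ℝ, (1 : Polynomial ℝ).eval p.1 * h p.2 * lancaster f₁ f₂ φ ψ ρ p.1 p.2 =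
        ∫ y, h y * f₂ y := by
    intro h hh C hC0 hC
    rw [key_integral hf₁ hf₂ hm₁ hm₂ hc hd hsum h₁ h₂ 1 h hh C hC0 hC]
    have e1 : ∫ x, (1 : Polynomial ℝ).eval x * f₁ x = 1 := by
      simp only [Polynomial.eval_one, one_mul]
      exact hf₁.2.2
    have e2 : ∀ k : ℕ, ρ (k+1) * ((∫ x, (1 : Polynomial ℝ).eval x * (φ (k+1)).eval x * f₁ x) *
        (∫ y, h y * (ψ (k+1)).eval y * f₂ y)) = 0 := by
      intro k
      have : ∫ x, (1 : Polynomial ℝ).eval x * (φ (k+1)).eval x * f₁ x = 0 := by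
        simp only [Polynomial.eval_one, one_mul]
        exact oφ1 (k+1) (by omega)
      rw [this, zero_mul, mul_zero]
    rw [e1, one_mul, tsum_congr e2, tsum_zero, add_zero]
  -- a.e. membership of (X, Y) in the support rectangle
  have haeR : ∀ᵐ ω ∂μ, X ω ∈ Set.Icc α₁ ω₁ ∧ Y ω ∈ Set.Icc α₂ ω₂ := by
    have hRmeas : MeasurableSet (Set.Icc α₁ ω₁ ×ˢ Set.Icc α₂ ω₂) :=
      measurableSet_Icc.prod measurableSet_Icc
    have h0 : ((volume : Measure (ℝ × ℝ)).withDensity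
        (fun p => ENNReal.ofReal (lancaster f₁ f₂ φ ψ ρ p.1 p.2)))
        ((Set.Icc α₁ ω₁ ×ˢ Set.Icc α₂ ω₂)ᶜ) = 0 := by
      rw [withDensity_apply _ hRmeas.compl]
      have hz : ∀ p ∈ (Set.Icc α₁ ω₁ ×ˢ Set.Icc α₂ ω₂)ᶜ,
          ENNReal.ofReal (lancaster f₁ f₂ φ ψ ρ p.1 p.2) = (0 : ℝ≥0∞) := by
        intro p hp
        rw [Set.mem_compl_iff, Set.mem_prod, not_and_or] at hp
        have hL0 : lancaster f₁ f₂ φ ψ ρ p.1 p.2 = 0 := by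
          rcases hp with hp | hp
          · show f₁ p.1 * f₂ p.2 * _ = 0
            rw [hf₁.2.1 p.1 hp, zero_mul, zero_mul]
          · show f₁ p.1 * f₂ p.2 * _ = 0
            rw [hf₂.2.1 p.2 hp, mul_zero, zero_mul]
        rw [hL0]; simp
      rw [setLIntegral_congr_fun hRmeas.compl hz]
      simp
    have h1 : μ ((fun ω => (X ω, Y ω)) ⁻¹' (Set.Icc α₁ ω₁ ×ˢ Set.Icc α₂ ω₂)ᶜ) = 0 := by
      rw [← Measure.map_apply (hX.prodMk hY) hRmeas.compl, hjoint]
      exact h0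
    have h2 : ∀ᵐ ω ∂μ, (X ω, Y ω) ∈ Set.Icc α₁ ω₁ ×ˢ Set.Icc α₂ ω₂ := by
      rw [ae_iff]
      exact h1
    filter_upwards [h2] with ω hω
    exact ⟨hω.1, hω.2⟩
  -- integrability
  have hintφX : Integrable (fun ω => (φ n).eval (X ω)) μ := by
    refine Integrable.mono' (integrable_const (c n))
      (((φ n).continuous.measurable.comp hX).aestronglyMeasurable) ?_
    filter_upwards [haeR] with ω hω
    rw [Real.norm_eq_abs]
    rw [hc]
    exact sup_bound hω.1
  have hintψY : Integrable (fun ω => ρ n * (ψ n).eval (Y ω)) μ := by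
    refine Integrable.mono' (integrable_const (|ρ n| * d n))
      ((measurable_const.mul ((ψ n).continuous.measurable.comp hY)).aestronglyMeasurable) ?_
    filter_upwards [haeR] with ω hω
    rw [Real.norm_eq_abs, abs_mul]
    refine mul_le_mul_of_nonneg_left ?_ (abs_nonneg _)
    rw [hd]
    exact sup_bound hω.2
  -- conditional expectation characterization
  have hm : MeasurableSpace.comap Y inferInstance ≤ _ := hY.comap_le
  refine (ae_eq_condExp_of_forall_setIntegral_eq hm hintφX
    (fun s _ _ => hintψY.integrableOn) ?_ ?_).symm
  · rintro s ⟨B, hB, rfl⟩ -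
    have hBind : Measurable (Set.indicator B (fun _ => (1 : ℝ))) :=
      measurable_const.indicator hB
    have hC1 : ∀ y ∈ Set.Icc α₂ ω₂, |Set.indicator B (fun _ => (1 : ℝ)) y| ≤ 1 := by
      intro y _
      by_cases hy : y ∈ B <;>
        simp [Set.indicator_of_mem, Set.indicator_of_notMem, hy]
    have hg1 : Measurable (fun p : ℝ × ℝ =>
        (φ n).eval p.1 * Set.indicator B (fun _ => (1 : ℝ)) p.2) :=
      ((φ n).continuous.measurable.comp measurable_fst).mul (hBind.comp measurable_snd)
    have hg2 : Measurable (fun p : ℝ × ℝ => (1 : Polynomial ℝ).eval p.1 *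
        (Set.indicator B (fun _ => (1 : ℝ)) p.2 * (ψ n).eval p.2)) :=
      ((1 : Polynomial ℝ).continuous.measurable.comp measurable_fst).mul
        ((hBind.mul (ψ n).continuous.measurable).comp measurable_snd)
    have hC2 : ∀ y ∈ Set.Icc α₂ ω₂,
        |Set.indicator B (fun _ => (1 : ℝ)) y * (ψ n).eval y| ≤ d n := by
      intro y hy
      rw [abs_mul]
      calc |Set.indicator B (fun _ => (1 : ℝ)) y| * |(ψ n).eval y|
          ≤ 1 * |(ψ n).eval y| :=
            mul_le_mul_of_nonneg_right (hC1 y hy) (abs_nonneg _)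
        _ = |(ψ n).eval y| := one_mul _
        _ ≤ d n := by rw [hd]; exact sup_bound hy
    have eL : ∫ ω in Y ⁻¹' B, (φ n).eval (X ω) ∂μ =
        ρ n * ∫ y, Set.indicator B (fun _ => (1 : ℝ)) y * (ψ n).eval y * f₂ y := by
      have he : Set.indicator (Y ⁻¹' B) (fun ω => (φ n).eval (X ω)) =
          fun ω => (φ n).eval (X ω) * Set.indicator B (fun _ => (1 : ℝ)) (Y ω) := by
        funext ω
        by_cases hω : Y ω ∈ B <;>
          simp [Set.indicator_apply, Set.mem_preimage, hω]
      calc ∫ ω in Y ⁻¹' B, (φ n).eval (X ω) ∂μ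
          = ∫ ω, Set.indicator (Y ⁻¹' B) (fun ω => (φ n).eval (X ω)) ω ∂μ :=
            (integral_indicator (hY hB)).symm
        _ = ∫ p : ℝ × ℝ, ((φ n).eval p.1 * Set.indicator B (fun _ => (1 : ℝ)) p.2) *
              lancaster f₁ f₂ φ ψ ρ p.1 p.2 := by
            rw [he]; exact hpull _ hg1
        _ = ρ n * ∫ y, Set.indicator B (fun _ => (1 : ℝ)) y * (ψ n).eval y * f₂ y :=
            hmain _ hBind 1 zero_le_one hC1
    have eR : ∫ ω in Y ⁻¹' B, ρ n * (ψ n).eval (Y ω) ∂μ =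
        ρ n * ∫ y, Set.indicator B (fun _ => (1 : ℝ)) y * (ψ n).eval y * f₂ y := by
      calc ∫ ω in Y ⁻¹' B, ρ n * (ψ n).eval (Y ω) ∂μ
          = ∫ ω, Set.indicator (Y ⁻¹' B) (fun ω => ρ n * (ψ n).eval (Y ω)) ω ∂μ :=
            (integral_indicator (hY hB)).symm
        _ = ρ n * ∫ ω, (1 : Polynomial ℝ).eval (X ω) *
              (Set.indicator B (fun _ => (1 : ℝ)) (Y ω) * (ψ n).eval (Y ω)) ∂μ := by
            rw [← integral_const_mul]
            refine integral_congr_ae (Filter.Eventually.of_forall fun ω => ?_)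
            by_cases hω : Y ω ∈ B <;>
              simp [Set.indicator_apply, Set.mem_preimage, hω]
        _ = ρ n * ∫ p : ℝ × ℝ, ((1 : Polynomial ℝ).eval p.1 *
              (Set.indicator B (fun _ => (1 : ℝ)) p.2 * (ψ n).eval p.2)) *
              lancaster f₁ f₂ φ ψ ρ p.1 p.2 :=
            congrArg (fun t => ρ n * t) (hpull _ hg2)
        _ = ρ n * ∫ y, Set.indicator B (fun _ => (1 : ℝ)) y * (ψ n).eval y * f₂ y :=
            congrArg (fun t => ρ n * t)
              (hmain1 (fun y => Set.indicator B (fun _ => (1 : ℝ)) y * (ψ n).eval y)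
                (hBind.mul (ψ n).continuous.measurable) (d n) (hdnn n) hC2)
    rw [eL, eR]
  · refine StronglyMeasurable.aestronglyMeasurable ?_
    refine Measurable.stronglyMeasurable ?_
    exact (measurable_const.mul ((ψ n).continuous.measurable)).comp
      (Measurable.of_comap_le le_rfl)
/-- If `(X,Y)` has the Lancaster density, then for every `n ≥ 1`,
`E(φₙ(X)|Y) = ρₙ ψₙ(Y)` a.s. and `E(ψₙ(Y)|X) = ρₙ φₙ(X)` a.s. -/
theorem stmt6 {Ω : Type*} [MeasurableSpace Ω] (μ : Measure Ω) [IsProbabilityMeasure μ]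
    (X Y : Ω → ℝ) (hX : Measurable X) (hY : Measurable Y)
    (α₁ ω₁ α₂ ω₂ : ℝ) (h₁ : α₁ < ω₁) (h₂ : α₂ < ω₂)
    (f₁ f₂ : ℝ → ℝ) (hf₁ : IsDensityOn f₁ α₁ ω₁) (hf₂ : IsDensityOn f₂ α₂ ω₂)
    (hm₁ : Measurable f₁) (hm₂ : Measurable f₂)
    (φ ψ : ℕ → Polynomial ℝ)
    (hφ : OrthonormalPolys f₁ φ) (hψ : OrthonormalPolys f₂ ψ)
    (c d : ℕ → ℝ)
    (hc : ∀ n, c n = sSup ((fun x => |(φ n).eval x|) '' Set.Icc α₁ ω₁))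
    (hd : ∀ n, d n = sSup ((fun y => |(ψ n).eval y|) '' Set.Icc α₂ ω₂))
    (ρ : ℕ → ℝ)
    (hsum : Summable fun n : ℕ => |ρ (n + 1)| * c (n + 1) * d (n + 1))
    (hρ : ∑' n : ℕ, |ρ (n + 1)| * c (n + 1) * d (n + 1) ≤ 1)
    (hjoint : Measure.map (fun ω => (X ω, Y ω)) μ =
      (volume : Measure (ℝ × ℝ)).withDensity
        (fun p => ENNReal.ofReal (lancaster f₁ f₂ φ ψ ρ p.1 p.2))) :
    ∀ n : ℕ, 1 ≤ n →
      (μ[(fun ω => (φ n).eval (X ω)) | MeasurableSpace.comap Y inferInstance]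
          =ᵐ[μ] fun ω => ρ n * (ψ n).eval (Y ω)) ∧
      (μ[(fun ω => (ψ n).eval (Y ω)) | MeasurableSpace.comap X inferInstance]
          =ᵐ[μ] fun ω => ρ n * (φ n).eval (X ω)) := by
  intro n hn
  constructor
  · exact lancaster_condexp μ X Y hX hY α₁ ω₁ α₂ ω₂ h₁.le h₂.le f₁ f₂ hf₁ hf₂ hm₁ hm₂
      φ ψ hφ hψ c d hc hd ρ hsum hρ hjoint n hn
  · have hsum' : Summable fun k : ℕ => |ρ (k + 1)| * d (k + 1) * c (k + 1) :=
      hsum.congr fun k => by ring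
    have hρ' : ∑' k : ℕ, |ρ (k + 1)| * d (k + 1) * c (k + 1) ≤ 1 := by
      calc ∑' k : ℕ, |ρ (k + 1)| * d (k + 1) * c (k + 1)
          = ∑' k : ℕ, |ρ (k + 1)| * c (k + 1) * d (k + 1) := tsum_congr fun k => by ring
        _ ≤ 1 := hρ
    have hswap : ∀ p : ℝ × ℝ,
        lancaster f₁ f₂ φ ψ ρ p.2 p.1 = lancaster f₂ f₁ ψ φ ρ p.1 p.2 := by
      intro p
      show f₁ p.2 * f₂ p.1 * (1 + ∑' k : ℕ, ρ (k+1) * (φ (k+1)).eval p.2 * (ψ (k+1)).eval p.1)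
        = f₂ p.1 * f₁ p.2 * (1 + ∑' k : ℕ, ρ (k+1) * (ψ (k+1)).eval p.1 * (φ (k+1)).eval p.2)
      rw [tsum_congr (fun k => by ring :
        ∀ k : ℕ, ρ (k+1) * (φ (k+1)).eval p.2 * (ψ (k+1)).eval p.1 =
          ρ (k+1) * (ψ (k+1)).eval p.1 * (φ (k+1)).eval p.2)]
      ring
    have measL : Measurable fun p : ℝ × ℝ => lancaster f₁ f₂ φ ψ ρ p.1 p.2 :=
      measurable_lancaster hf₁ hf₂ hm₁ hm₂ hc hd hsum
    have hjoint' : Measure.map (fun ω => (Y ω, X ω)) μ =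
        (volume : Measure (ℝ × ℝ)).withDensity
          (fun p => ENNReal.ofReal (lancaster f₂ f₁ ψ φ ρ p.1 p.2)) := by
      have hcomp : (fun ω => (Y ω, X ω)) = Prod.swap ∘ (fun ω => (X ω, Y ω)) := rfl
      rw [hcomp, ← Measure.map_map measurable_swap (hX.prodMk hY), hjoint,
        map_swap_withDensity _ measL.ennreal_ofReal]
      refine congrArg _ (funext fun p => ?_)
      show ENNReal.ofReal (lancaster f₁ f₂ φ ψ ρ p.2 p.1) = _
      rw [hswap p]
    exact lancaster_condexp μ Y X hY hX α₂ ω₂ α₁ ω₁ h₂.le h₁.le f₂ f₁ hf₂ hf₁ hm₂ hm₁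
      ψ φ hψ hφ d c hd hc ρ hsum' hρ' hjoint' n hn
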